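/- The function β ↦ 2β e^{β²} ∫_β^∞ e^{-z²} dz is strictly increasing on (0,∞). -/

import Mathlib

open MeasureTheory Real Set

private noncomputable def Ifun (β : ℝ) : ℝ := ∫ z in Set.Ioi β, Real.exp (-z ^ 2)

private noncomputable def Gfun (z : ℝ) : ℝ := z * Real.exp (-z ^ 2) / (2 * z ^ 2 + 1)

private lemma exp_integrable : Integrable (fun z : ℝ => Real.exp (-z ^ 2)) := by
  have := integrable_exp_neg_mul_sq (b := 1) one_pos
  simpa using this

private lemma exp_integrableOn (a : ℝ) :
    IntegrableOn (fun z : ℝ => Real.exp (-z ^ 2)) (Set.Ioi a) :=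
  exp_integrable.integrableOn

private lemma denom_pos (z : ℝ) : (0:ℝ) < 2 * z ^ 2 + 1 := by positivity

private lemma Gfun_hasDerivAt (z : ℝ) :
    HasDerivAt Gfun (Real.exp (-z ^ 2) * (1 - 4 * z ^ 2 - 4 * z ^ 4) / (2 * z ^ 2 + 1) ^ 2) z := by
  have h1 : HasDerivAt (fun z : ℝ => -z ^ 2) (-(2 * z)) z := by
    simpa using ((hasDerivAt_pow 2 z).fun_neg)
  have h2 : HasDerivAt (fun z : ℝ => Real.exp (-z ^ 2)) (Real.exp (-z ^ 2) * (-(2 * z))) z :=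
    (Real.hasDerivAt_exp _).comp z h1
  have h3 : HasDerivAt (fun z : ℝ => z * Real.exp (-z ^ 2))
      (1 * Real.exp (-z ^ 2) + z * (Real.exp (-z ^ 2) * (-(2 * z)))) z :=
    (hasDerivAt_id z).mul h2
  have h4 : HasDerivAt (fun z : ℝ => 2 * z ^ 2 + 1) (2 * (2 * z)) z := by
    simpa using (((hasDerivAt_pow 2 z).const_mul 2).add_const 1)
  have h5 := h3.fun_div h4 (ne_of_gt (denom_pos z))
  refine h5.congr_deriv (Eq.symm ?_)
  have hd := (denom_pos z).ne'
  field_simp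
  ring

private lemma Gfun_tendsto : Filter.Tendsto Gfun Filter.atTop (nhds 0) := by
  have hb : ∀ᶠ z in Filter.atTop, Gfun z ≤ Real.exp (-z ^ 2) := by
    filter_upwards [Filter.eventually_ge_atTop (0:ℝ)] with z hz
    rw [Gfun, div_le_iff₀ (denom_pos z)]
    have h1 : z ≤ 2 * z ^ 2 + 1 := by nlinarith
    have h2 : (0:ℝ) < Real.exp (-z ^ 2) := Real.exp_pos _
    nlinarith
  have hb' : ∀ᶠ z in Filter.atTop, 0 ≤ Gfun z := by
    filter_upwards [Filter.eventually_ge_atTop (0:ℝ)] with z hz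
    rw [Gfun]
    exact div_nonneg (mul_nonneg hz (Real.exp_pos _).le) (denom_pos z).le
  have hexp : Filter.Tendsto (fun z : ℝ => Real.exp (-z ^ 2)) Filter.atTop (nhds 0) := by
    apply Real.tendsto_exp_atBot.comp
    have : Filter.Tendsto (fun z : ℝ => z ^ 2) Filter.atTop Filter.atTop :=
      Filter.tendsto_pow_atTop (by norm_num)
    exact Filter.tendsto_neg_atBot_iff.mpr this
  exact squeeze_zero' hb' hb hexp

private lemma negG'_integrable (a : ℝ) :
    IntegrableOn (fun z : ℝ =>
      -(Real.exp (-z ^ 2) * (1 - 4 * z ^ 2 - 4 * z ^ 4) / (2 * z ^ 2 + 1) ^ 2)) (Set.Ioi a) := by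
  apply Integrable.mono (exp_integrableOn a)
  · apply Measurable.aestronglyMeasurable
    fun_prop
  · filter_upwards with z
    rw [Real.norm_eq_abs, Real.norm_eq_abs, abs_neg, abs_div, abs_of_pos (Real.exp_pos _)]
    rw [abs_mul, abs_of_pos (Real.exp_pos _)]
    have hd : |(2 * z ^ 2 + 1) ^ 2| = (2 * z ^ 2 + 1) ^ 2 := abs_of_pos (by positivity)
    rw [hd, div_le_iff₀ (by positivity)]
    have : |1 - 4 * z ^ 2 - 4 * z ^ 4| ≤ (2 * z ^ 2 + 1) ^ 2 := by
      rw [abs_le]; constructor <;> nlinarith [sq_nonneg z, sq_nonneg (z^2)]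
    nlinarith [Real.exp_pos (-z ^ 2), this, abs_nonneg (1 - 4 * z ^ 2 - 4 * z ^ 4)]

/-- The key Mills-ratio type lower bound. -/
private lemma Ifun_gt (β : ℝ) (hβ : 0 < β) : Gfun β < Ifun β := by
  have hFTC : ∫ z in Set.Ioi β, -(Real.exp (-z ^ 2) * (1 - 4 * z ^ 2 - 4 * z ^ 4)
      / (2 * z ^ 2 + 1) ^ 2) = Gfun β := by
    have := integral_Ioi_of_hasDerivAt_of_tendsto' (a := β) (f := fun z => -Gfun z)
      (f' := fun z => -(Real.exp (-z ^ 2) * (1 - 4 * z ^ 2 - 4 * z ^ 4) / (2 * z ^ 2 + 1) ^ 2))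
      (m := 0) (fun x _ => (Gfun_hasDerivAt x).neg) (negG'_integrable β)
      (by simpa using Gfun_tendsto.neg)
    simpa using this
  have hdiff : Ifun β - Gfun β = ∫ z in Set.Ioi β,
      (Real.exp (-z ^ 2) - -(Real.exp (-z ^ 2) * (1 - 4 * z ^ 2 - 4 * z ^ 4)
        / (2 * z ^ 2 + 1) ^ 2)) := by
    rw [integral_sub (exp_integrableOn β) (negG'_integrable β), hFTC, Ifun]
  have hpos : 0 < Ifun β - Gfun β := by
    rw [hdiff]
    have heq : ∀ z : ℝ, Real.exp (-z ^ 2) - -(Real.exp (-z ^ 2) * (1 - 4 * z ^ 2 - 4 * z ^ 4)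
        / (2 * z ^ 2 + 1) ^ 2) = 2 * Real.exp (-z ^ 2) / (2 * z ^ 2 + 1) ^ 2 := by
      intro z
      have hd := (denom_pos z).ne'
      field_simp
      ring
    simp_rw [heq]
    have hint : IntegrableOn (fun z : ℝ => 2 * Real.exp (-z ^ 2) / (2 * z ^ 2 + 1) ^ 2)
        (Set.Ioi β) := by
      apply Integrable.mono ((exp_integrableOn β).const_mul 2)
      · apply Measurable.aestronglyMeasurable; fun_prop
      · filter_upwards with z
        rw [Real.norm_eq_abs, Real.norm_eq_abs]
        have h1 : (1:ℝ) ≤ (2 * z ^ 2 + 1) ^ 2 := by nlinarith [sq_nonneg z, sq_nonneg (z^2)]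
        rw [abs_of_pos (by positivity), abs_of_pos (by positivity)]
        rw [div_le_iff₀ (by positivity)]
        nlinarith [Real.exp_pos (-z ^ 2)]
    apply (setIntegral_pos_iff_support_of_nonneg_ae _ hint).mpr
    · have : (Set.Ioi β) ⊆ (Function.support fun z : ℝ =>
          2 * Real.exp (-z ^ 2) / (2 * z ^ 2 + 1) ^ 2) ∩ (Set.Ioi β) := by
        intro z hz
        refine ⟨?_, hz⟩
        simp only [Function.mem_support]
        positivity
      calc (0:ENNReal) < volume (Set.Ioi β) := by simp
        _ ≤ _ := measure_mono this
    · refine Filter.Eventually.of_forall fun z => ?_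
      positivity
  linarith

private lemma Ifun_eq (β : ℝ) : Ifun β = Ifun 0 - ∫ z in (0:ℝ)..β, Real.exp (-z ^ 2) := by
  rcases le_or_gt 0 β with h | h
  · rw [intervalIntegral.integral_of_le h, eq_sub_iff_add_eq, Ifun, Ifun, add_comm,
      ← setIntegral_union (Set.Ioc_disjoint_Ioi le_rfl) measurableSet_Ioi
        (exp_integrable.integrableOn) (exp_integrable.integrableOn),
      Set.Ioc_union_Ioi_eq_Ioi h]
  · rw [intervalIntegral.integral_symm, intervalIntegral.integral_of_le h.le, sub_neg_eq_add,
      eq_comm, Ifun, Ifun, add_comm,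
      ← setIntegral_union (Set.Ioc_disjoint_Ioi le_rfl) measurableSet_Ioi
        (exp_integrable.integrableOn) (exp_integrable.integrableOn),
      Set.Ioc_union_Ioi_eq_Ioi h.le]

private lemma Ifun_hasDerivAt (β : ℝ) : HasDerivAt Ifun (-Real.exp (-β ^ 2)) β := by
  have h : HasDerivAt (fun u : ℝ => ∫ z in (0:ℝ)..u, Real.exp (-z ^ 2)) (Real.exp (-β ^ 2)) β :=
    intervalIntegral.integral_hasDerivAt_right (exp_integrable.intervalIntegrable)
      (exp_integrable.aestronglyMeasurable.stronglyMeasurableAtFilter)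
      (by fun_prop)
  have := (h.const_sub (Ifun 0))
  refine HasDerivAt.congr_of_eventuallyEq (by simpa using this) ?_
  filter_upwards with x
  rw [Ifun_eq x]

theorem stmt_1 :
    StrictMonoOn (fun β : ℝ => 2 * β * Real.exp (β ^ 2) * ∫ z in Set.Ioi β, Real.exp (-z ^ 2))
      (Set.Ioi 0) := by
  have hf : ∀ β : ℝ, HasDerivAt (fun β : ℝ => 2 * β * Real.exp (β ^ 2) * Ifun β)
      ((2 + 4 * β ^ 2) * Real.exp (β ^ 2) * Ifun β - 2 * β) β := by
    intro β
    have h1 : HasDerivAt (fun β : ℝ => Real.exp (β ^ 2)) (Real.exp (β ^ 2) * (2 * β)) β :=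
      (Real.hasDerivAt_exp _).comp β (by simpa using hasDerivAt_pow 2 β)
    have h2 : HasDerivAt (fun β : ℝ => 2 * β * Real.exp (β ^ 2))
        (2 * Real.exp (β ^ 2) + 2 * β * (Real.exp (β ^ 2) * (2 * β))) β := by
      simpa using ((hasDerivAt_id β).const_mul 2).fun_mul h1
    have h3 := h2.fun_mul (Ifun_hasDerivAt β)
    refine h3.congr_deriv (Eq.symm ?_)
    have h4 : Real.exp (β ^ 2) * Real.exp (-β ^ 2) = 1 := by
      rw [← Real.exp_add]; simp
    linear_combination 2 * β * h4
  have hcont : ContinuousOn (fun β : ℝ => 2 * β * Real.exp (β ^ 2) * Ifun β) (Set.Ioi 0) :=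
    fun x _ => (hf x).continuousAt.continuousWithinAt
  have key : StrictMonoOn (fun β : ℝ => 2 * β * Real.exp (β ^ 2) * Ifun β) (Set.Ioi 0) := by
    apply strictMonoOn_of_deriv_pos (convex_Ioi 0) hcont
    intro x hx
    rw [interior_Ioi] at hx
    rw [(hf x).deriv]
    have hI := Ifun_gt x hx
    have hG : Gfun x = x * Real.exp (-x ^ 2) / (2 * x ^ 2 + 1) := rfl
    have hd := denom_pos x
    have hexp : Real.exp (x ^ 2) * Real.exp (-x ^ 2) = 1 := by
      rw [← Real.exp_add]; simp
    have h1 : (2 + 4 * x ^ 2) * Real.exp (x ^ 2) * Gfun x = 2 * x := by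
      rw [hG]; field_simp; linear_combination x * (2 + 4 * x ^ 2) * hexp
    have h2 : (2 + 4 * x ^ 2) * Real.exp (x ^ 2) * Gfun x
        < (2 + 4 * x ^ 2) * Real.exp (x ^ 2) * Ifun x := by
      apply mul_lt_mul_of_pos_left hI
      positivity
    linarith
  exact key
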